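/- arXiv:1104.5043 — 3 statements merged into one kernel-verified Lean document; each statement's English description precedes it below -/
import Mathlib

section
/- Let P be a finite set of points, none contained in any disk of a finite disk set I that separates P. If a subset B ⊆ I separates some pair of P, partitioning P into parts P₁,…,P_τ by faces of ℝ² \ ⋃B with τ ≥ 2, and Oⱼ ⊆ I separates Pⱼ for each j, then B ∪ ⋃ⱼ Oⱼ separates P. -/
/-- The Euclidean plane. -/
abbrev Plane := EuclideanSpace ℝ (Fin 2)

/-- `B` separates `s` and `t`: every continuous path from `s` to `t` meets some
set (disk) in `B`. -/
def Separates (B : Set (Set Plane)) (s t : Plane) : Prop :=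
  ∀ γ : Path s t, ∃ u, ∃ d ∈ B, γ u ∈ d

/-- Correctness of the recursive step: let `P` be a finite set of points, none
contained in any disk of a finite disk set `I` separating `P`. Suppose `B ⊆ I`
separates some pair of `P` (so `P` is partitioned into at least two parts by the
faces of the complement of `⋃ B`), and for each face `F` a set `O F ⊆ I`
separates the part of `P` lying in `F`. Then `B` together with all the `O F`
separates `P`. -/
theorem stmt_7 (I B : Finset (Set Plane)) (hBI : B ⊆ I)
    (hI : ∀ d ∈ I, ∃ (c : Plane) (r : ℝ), 0 < r ∧ d = Metric.closedBall c r)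
    (P : Finset Plane)
    (hout : ∀ p ∈ P, ∀ d ∈ I, p ∉ d)
    (hIsep : ∀ p ∈ P, ∀ q ∈ P, p ≠ q → Separates (↑I) p q)
    (hpair : ∃ s ∈ P, ∃ t ∈ P, s ≠ t ∧ Separates (↑B) s t)
    (O : Set Plane → Finset (Set Plane)) (hO : ∀ F, O F ⊆ I)
    (hOsep : ∀ p ∈ P, ∀ q ∈ P, p ≠ q →
      connectedComponentIn (⋃ d ∈ B, d)ᶜ p = connectedComponentIn (⋃ d ∈ B, d)ᶜ q →
      Separates (↑(O (connectedComponentIn (⋃ d ∈ B, d)ᶜ p))) p q) :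
    ∀ p ∈ P, ∀ q ∈ P, p ≠ q →
      Separates ((↑B : Set (Set Plane)) ∪ ⋃ F : Set Plane, ↑(O F)) p q := by
  intro p hp q hq hpq γ
  by_cases hcc : connectedComponentIn (⋃ d ∈ B, d)ᶜ p = connectedComponentIn (⋃ d ∈ B, d)ᶜ q
  · obtain ⟨u, d, hd, hmem⟩ := hOsep p hp q hq hpq hcc γ
    exact ⟨u, d, Or.inr (Set.mem_iUnion.2 ⟨_, hd⟩), hmem⟩
  · by_contra h
    push_neg at h
    apply hcc
    have hrange : Set.range γ ⊆ (⋃ d ∈ B, d)ᶜ := by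
      rintro x ⟨u, rfl⟩
      simp only [Set.mem_compl_iff, Set.mem_iUnion]
      rintro ⟨d, hd, hx⟩
      exact h u d (Or.inl hd) hx
    have hq' : q ∈ connectedComponentIn (⋃ d ∈ B, d)ᶜ p := by
      have hconn : IsPreconnected (Set.range γ) :=
        (isConnected_range γ.continuous).isPreconnected
      have hp' : p ∈ Set.range γ := ⟨0, γ.source⟩
      have := hconn.subset_connectedComponentIn hp' hrange
      exact this ⟨1, γ.target⟩
    exact connectedComponentIn_eq hq'
end

section
/- Let OPT be a finite set of disks separating a finite point set P (no point of P in any disk). For each p ∈ P let F_p ⊆ OPT be the disks contributing to the boundary of the face of ℝ² \ ⋃OPT containing p. Then for any point q ≠ p in P, the set F_p separates p and q. -/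
/-- Let `OPT` be a finite set of disks separating a finite point set `P`, with no
point of `P` in any disk. For `p ∈ P`, let `F_p ⊆ OPT` be the disks contributing to
the boundary of the face (connected component of the complement of `⋃ OPT`)
containing `p`, i.e. whose boundary meets the boundary of that face. Then for any
`q ∈ P` with `q ≠ p`, the set `F_p` separates `p` and `q`. -/
theorem stmt_8 (OPT : Finset (Set Plane))
    (hOPT : ∀ d ∈ OPT, ∃ (c : Plane) (r : ℝ), 0 < r ∧ d = Metric.closedBall c r)
    (P : Finset Plane)
    (hout : ∀ p ∈ P, ∀ d ∈ OPT, p ∉ d)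
    (hsep : ∀ p ∈ P, ∀ q ∈ P, p ≠ q → Separates (↑OPT) p q)
    (p : Plane) (hp : p ∈ P) (q : Plane) (hq : q ∈ P) (hpq : q ≠ p) :
    Separates
      {d | d ∈ OPT ∧
        (frontier d ∩
          frontier (connectedComponentIn (⋃ d' ∈ OPT, d')ᶜ p)).Nonempty}
      p q := by
  intro γ
  set U : Set Plane := (⋃ d' ∈ OPT, d')ᶜ with hU
  set F : Set Plane := connectedComponentIn U p with hF
  -- each disk is closed
  have hclosed : ∀ d ∈ OPT, IsClosed d := by
    intro d hd
    obtain ⟨c, r, _, rfl⟩ := hOPT d hd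
    exact Metric.isClosed_closedBall
  have hUopen : IsOpen U := by
    rw [hU, isOpen_compl_iff]
    exact Set.Finite.isClosed_biUnion OPT.finite_toSet hclosed
  have hpU : p ∈ U := by
    simp only [hU, Set.mem_compl_iff, Set.mem_iUnion, not_exists]
    intro d hd
    exact hout p hp d hd
  have hpF : p ∈ F := mem_connectedComponentIn hpU
  have hFU : F ⊆ U := connectedComponentIn_subset U p
  have hFopen : IsOpen F := hUopen.connectedComponentIn
  -- closure of a component meets U only in the component
  have key : ∀ y ∈ closure F, y ∈ U → y ∈ F := by
    intro y hyc hyU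
    have hF' : IsOpen (connectedComponentIn U y) := hUopen.connectedComponentIn
    have hy' : y ∈ connectedComponentIn U y := mem_connectedComponentIn hyU
    obtain ⟨z, hz1, hz2⟩ := mem_closure_iff.mp hyc _ hF' hy'
    have e1 := connectedComponentIn_eq hz1
    have e2 := connectedComponentIn_eq hz2
    rw [e1, ← e2] at hy'
    exact hy'
  -- the path must leave F at some time
  obtain ⟨u, d₀, hd₀, hγu⟩ := hsep p hp q hq (Ne.symm hpq) γ
  have hd₀' : d₀ ∈ OPT := hd₀
  have hγuF : γ.extend u.1 ∉ F := by
    rw [γ.extend_apply u.2]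
    intro h
    have : (γ u : Plane) ∈ U := hFU h
    simp only [hU, Set.mem_compl_iff, Set.mem_iUnion, not_exists] at this
    exact this d₀ hd₀' hγu
  set S : Set ℝ := {t | t ∈ Set.Icc (0:ℝ) 1 ∧ γ.extend t ∉ F} with hS
  have hScl : IsClosed S := by
    have : S = Set.Icc (0:ℝ) 1 ∩ γ.extend ⁻¹' Fᶜ := rfl
    rw [this]
    exact isClosed_Icc.inter (hFopen.isClosed_compl.preimage γ.continuous_extend)
  have hSne : S.Nonempty := ⟨u.1, u.2, hγuF⟩
  have hSbdd : BddBelow S := ⟨0, fun t ht => ht.1.1⟩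
  set t₀ : ℝ := sInf S with ht₀
  have ht₀S : t₀ ∈ S := hScl.csInf_mem hSne hSbdd
  have ht₀pos : 0 < t₀ := by
    rcases lt_or_eq_of_le ht₀S.1.1 with h | h
    · exact h
    · exfalso
      apply ht₀S.2
      rw [← h, γ.extend_zero]
      exact hpF
  -- before t₀ the path is in F
  have hbefore : ∀ t ∈ Set.Ico (0:ℝ) t₀, γ.extend t ∈ F := by
    intro t ht
    by_contra hc
    have htS : t ∈ S := ⟨⟨ht.1, le_trans (le_of_lt ht.2) ht₀S.1.2⟩, hc⟩
    exact absurd (csInf_le hSbdd htS) (not_le_of_gt ht.2)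
  set x : Plane := γ.extend t₀ with hx
  have hxcl : x ∈ closure F := by
    have h1 : t₀ ∈ closure (Set.Ico (0:ℝ) t₀) := by
      rw [closure_Ico (ne_of_lt ht₀pos)]
      exact Set.right_mem_Icc.mpr (le_of_lt ht₀pos)
    have h2 : x ∈ γ.extend '' closure (Set.Ico (0:ℝ) t₀) := ⟨t₀, h1, rfl⟩
    have h3 := image_closure_subset_closure_image γ.continuous_extend h2
    refine closure_mono ?_ h3
    rintro y ⟨t, ht, rfl⟩
    exact hbefore t ht
  have hxF : x ∉ F := ht₀S.2
  have hxU : x ∉ U := fun h => hxF (key x hxcl h)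
  have hxunion : x ∈ ⋃ d' ∈ OPT, d' := by
    by_contra h
    exact hxU h
  obtain ⟨d, hd, hxd⟩ := Set.mem_iUnion₂.mp hxunion
  refine ⟨⟨t₀, ht₀S.1⟩, d, ⟨hd, ⟨x, ?_, ?_⟩⟩, ?_⟩
  · -- x ∈ frontier d
    rw [frontier_eq_closure_inter_closure, (hclosed d hd).closure_eq]
    refine ⟨hxd, ?_⟩
    refine closure_mono ?_ hxcl
    intro y hy
    have hyU : y ∈ U := hFU hy
    simp only [hU, Set.mem_compl_iff, Set.mem_iUnion, not_exists] at hyU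
    exact hyU d hd
  · -- x ∈ frontier F
    rw [frontier_eq_closure_inter_closure]
    exact ⟨hxcl, subset_closure hxF⟩
  · -- γ ⟨t₀, _⟩ ∈ d
    rw [← γ.extend_apply ht₀S.1]
    exact hxd
end

section
/- Let σ = d₁,…,dₘ be a sequence of disks such that consecutive disks intersect and non-consecutive disks are disjoint, let s' ∈ d₁, t' ∈ dₘ, and choose xᵢ ∈ dᵢ ∩ dᵢ₊₁ for each i. Then the polygonal path s', x₁, x₂, …, x_{m-1}, t' is contained in ⋃ᵢ dᵢ, and its intersection with each dᵢ is connected. -/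
/-- Let `d 0, …, d m` be a sequence of closed disks such that non-consecutive disks
are disjoint, let `s' ∈ d 0` and `t' ∈ d m`, and let `x i ∈ d i ∩ d (i+1)` for each
`i`. Consider the polygonal path through the vertices `s', x 0, …, x (m-1), t'`
(the union of the consecutive segments). Then this path is contained in the union
of the disks, and its intersection with each disk `d i` is connected. -/
theorem stmt_10 (m : ℕ) (d : Fin (m + 1) → Set Plane)
    (hd : ∀ i, ∃ (c : Plane) (r : ℝ), 0 < r ∧ d i = Metric.closedBall c r)
    (hdisj : ∀ i j : Fin (m + 1), (i : ℕ) + 2 ≤ (j : ℕ) → Disjoint (d i) (d j))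
    (s' t' : Plane) (hs' : s' ∈ d 0) (ht' : t' ∈ d (Fin.last m))
    (x : Fin m → Plane) (hx : ∀ i : Fin m, x i ∈ d i.castSucc ∩ d i.succ)
    (vert : Fin (m + 2) → Plane)
    (hv0 : vert 0 = s') (hvlast : vert (Fin.last (m + 1)) = t')
    (hvmid : ∀ i : Fin m, vert i.succ.castSucc = x i) :
    (⋃ i : Fin (m + 1), segment ℝ (vert i.castSucc) (vert i.succ)) ⊆
        (⋃ i, d i) ∧
      ∀ i : Fin (m + 1),
        IsConnected ((⋃ j : Fin (m + 1), segment ℝ (vert j.castSucc) (vert j.succ))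
          ∩ d i) := by
  have hconv : ∀ j : Fin (m + 1), Convex ℝ (d j) := by
    intro j
    obtain ⟨c, r, _, h⟩ := hd j
    rw [h]; exact convex_closedBall c r
  have hleft : ∀ j : Fin (m + 1), vert j.castSucc ∈ d j := by
    intro j
    induction j using Fin.cases with
    | zero =>
      have h0 : (Fin.castSucc (0 : Fin (m + 1))) = (0 : Fin (m + 2)) := rfl
      rw [h0, hv0]; exact hs'
    | succ i => rw [hvmid i]; exact (hx i).2
  have hright : ∀ j : Fin (m + 1), vert j.succ ∈ d j := by
    intro j
    induction j using Fin.lastCases with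
    | last =>
      have h1 : (Fin.last m).succ = Fin.last (m + 1) := by ext; simp
      rw [h1, hvlast]; exact ht'
    | cast i =>
      have h1 : (Fin.castSucc i).succ = (Fin.succ i).castSucc := by ext; simp
      rw [h1, hvmid i]; exact (hx i).1
  have hseg : ∀ j : Fin (m + 1), segment ℝ (vert j.castSucc) (vert j.succ) ⊆ d j :=
    fun j => (hconv j).segment_subset (hleft j) (hright j)
  constructor
  · exact Set.iUnion_subset fun j => (hseg j).trans (Set.subset_iUnion d j)
  · intro i
    set P : Fin (m + 1) → Set Plane :=
      fun j : Fin (m + 1) => segment ℝ (vert j.castSucc) (vert j.succ) ∩ d i with hP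
    have hT : (⋃ j : Fin (m + 1), segment ℝ (vert j.castSucc) (vert j.succ)) ∩ d i = ⋃ j, P j :=
      Set.iUnion_inter _ _
    rw [hT]
    set p := vert i.castSucc with hpdef
    set q := vert i.succ with hqdef
    have hp : p ∈ P i := ⟨left_mem_segment _ _ _, hleft i⟩
    have hq : q ∈ P i := ⟨right_mem_segment _ _ _, hright i⟩
    have hPconv : ∀ j, Convex ℝ (P j) := fun j => (convex_segment _ _).inter (hconv i)
    have hPpre : ∀ j, IsPreconnected (P j) := fun j => (hPconv j).isPreconnected
    have hkey : ∀ j, (P j).Nonempty → p ∈ P j ∨ q ∈ P j := by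
      rintro j ⟨y, hy1, hy2⟩
      have hnd : ¬ Disjoint (d j) (d i) := fun h => (h.ne_of_mem (hseg j hy1) hy2) rfl
      have h1 : ¬ ((i : ℕ) + 2 ≤ (j : ℕ)) := fun h => hnd ((hdisj i j h).symm)
      have h2 : ¬ ((j : ℕ) + 2 ≤ (i : ℕ)) := fun h => hnd (hdisj j i h)
      have hcases : (j : ℕ) = i ∨ (j : ℕ) + 1 = i ∨ (i : ℕ) + 1 = j := by omega
      rcases hcases with h | h | h
      · have : j = i := Fin.ext h
        left; rwa [this]
      · left
        refine ⟨?_, hleft i⟩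
        have he : j.succ = i.castSucc := by ext; simpa using h
        rw [hpdef, ← he]
        exact right_mem_segment _ _ _
      · right
        refine ⟨?_, hright i⟩
        have he : j.castSucc = i.succ := by ext; simpa using h.symm
        rw [hqdef, ← he]
        exact left_mem_segment _ _ _
    refine ⟨⟨p, Set.mem_iUnion.mpr ⟨i, hp⟩⟩, ?_⟩
    apply isPreconnected_of_forall_pair
    intro y hy z hz
    obtain ⟨j, hj⟩ := Set.mem_iUnion.mp hy
    obtain ⟨k, hk⟩ := Set.mem_iUnion.mp hz
    refine ⟨P j ∪ P i ∪ P k, ?_, Or.inl (Or.inl hj), Or.inr hk, ?_⟩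
    · refine Set.union_subset (Set.union_subset ?_ ?_) ?_ <;>
        exact Set.subset_iUnion P _
    · have hji : IsPreconnected (P j ∪ P i) := by
        rcases hkey j ⟨y, hj⟩ with h | h
        · exact IsPreconnected.union p h hp (hPpre j) (hPpre i)
        · exact IsPreconnected.union q h hq (hPpre j) (hPpre i)
      rcases hkey k ⟨z, hk⟩ with h | h
      · exact IsPreconnected.union p (Or.inr hp) h hji (hPpre k)
      · exact IsPreconnected.union q (Or.inr hq) h hji (hPpre k)
end
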